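/- arXiv:1703.08337 — 6 statements merged into one kernel-verified Lean document; each statement's English description precedes it below -/
import Mathlib

section
/- Let m, k be natural numbers with k ≤ m and let π : Fin m → ℝ. There exists a probability distribution P on the finite subsets of Fin m, supported on subsets of cardinality exactly k, such that for every j ∈ Fin m, Σ_{A : j ∈ A} P(A) = π_j, if and only if 0 ≤ π_j ≤ 1 for all j and Σ_{j=1}^m π_j = k. -/
open Finset

private lemma sum_two_update {m : ℕ} (f : Fin m → ℝ) (i j : Fin m) (hij : i ≠ j) (a b : ℝ) :
    ∑ l, Function.update (Function.update f j b) i a l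
      = ∑ l, f l - f i - f j + a + b := by
  rw [Finset.sum_update_of_mem (Finset.mem_univ i),
    Finset.sum_update_of_mem (by simp [hij.symm] : j ∈ Finset.univ \ {i})]
  rw [show (Finset.univ \ {i}) \ {j} = (Finset.univ.erase i).erase j by
    simp [Finset.sdiff_singleton_eq_erase, Finset.erase_sdiff_comm]]
  rw [Finset.sum_erase_eq_sub (by simp [hij.symm]), Finset.sum_erase_eq_sub (Finset.mem_univ i)]
  ring

private lemma hypersimplex_aux (m k : ℕ) :
    ∀ n : ℕ, ∀ π : Fin m → ℝ,
      (∀ j, 0 ≤ π j ∧ π j ≤ 1) → (∑ j : Fin m, π j = (k : ℝ)) →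
      (Finset.univ.filter (fun j : Fin m => π j ≠ 0 ∧ π j ≠ 1)).card ≤ n →
      ∃ P : Finset (Fin m) → ℝ,
        (∀ A, 0 ≤ P A) ∧ (∑ A : Finset (Fin m), P A = 1) ∧
        (∀ A, P A ≠ 0 → A.card = k) ∧
        (∀ j : Fin m, ∑ A ∈ Finset.univ.filter (fun A : Finset (Fin m) => j ∈ A), P A = π j) := by
  intro n
  induction n with
  | zero =>
    intro π hb hs hF
    have hF0 : (Finset.univ.filter (fun j : Fin m => π j ≠ 0 ∧ π j ≠ 1)) = ∅ :=
      Finset.card_eq_zero.mp (Nat.le_zero.mp hF)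
    have h01 : ∀ j, π j = 0 ∨ π j = 1 := by
      intro j
      by_contra h
      push_neg at h
      have : j ∈ (Finset.univ.filter (fun j : Fin m => π j ≠ 0 ∧ π j ≠ 1)) := by
        simp [h.1, h.2]
      simp [hF0] at this
    set A : Finset (Fin m) := Finset.univ.filter (fun j => π j = 1) with hA
    have hπA : ∀ j, π j = if j ∈ A then (1:ℝ) else 0 := by
      intro j
      rcases h01 j with h | h <;> simp [hA, h]
    have hcard : A.card = k := by
      have : (A.card : ℝ) = (k : ℝ) := by
        rw [← hs]
        simp_rw [hπA]
        rw [Finset.sum_ite_mem, Finset.univ_inter, Finset.sum_const, nsmul_eq_mul, mul_one]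
      exact_mod_cast this
    refine ⟨fun B => if B = A then 1 else 0, ?_, ?_, ?_, ?_⟩
    · intro B; dsimp only; split <;> norm_num
    · simp
    · intro B hB
      have : B = A := by by_contra h; simp [h] at hB
      rw [this, hcard]
    · intro j
      rw [Finset.sum_ite_eq' _ A (fun _ => (1:ℝ))]
      simp only [Finset.mem_filter, Finset.mem_univ, true_and]
      rw [hπA j]
  | succ n ih =>
    intro π hb hs hF
    set F := Finset.univ.filter (fun j : Fin m => π j ≠ 0 ∧ π j ≠ 1) with hFdef
    by_cases hle : F.card ≤ n
    · exact ih π hb hs hle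
    push_neg at hle
    have hFne : F.Nonempty := Finset.card_pos.mp (Nat.lt_of_lt_of_le (Nat.zero_lt_succ _) hle)
    obtain ⟨i, hiF⟩ := hFne
    have hi := (Finset.mem_filter.mp hiF).2
    have hi0 : 0 < π i := lt_of_le_of_ne (hb i).1 (Ne.symm hi.1)
    have hi1 : π i < 1 := lt_of_le_of_ne (hb i).2 hi.2
    -- there is another fractional coordinate
    have hexj : ∃ j ∈ F, j ≠ i := by
      by_contra h
      push_neg at h
      have hFi : F = {i} := by
        apply Finset.eq_singleton_iff_unique_mem.mpr
        exact ⟨hiF, fun x hx => h x hx⟩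
      set c := ((Finset.univ.erase i).filter (fun j => π j = 1)).card with hc
      have hsum2 : ∑ j ∈ Finset.univ.erase i, π j = (c : ℝ) := by
        have : ∀ j ∈ Finset.univ.erase i, π j = if π j = 1 then (1:ℝ) else 0 := by
          intro j hj
          have hji : j ≠ i := Finset.ne_of_mem_erase hj
          have : j ∉ F := by rw [hFi]; simp [hji]
          simp only [hFdef, Finset.mem_filter, Finset.mem_univ, true_and, not_and_or,
            not_not] at this
          rcases this with h0 | h1
          · simp [h0]
          · simp [h1]
        rw [Finset.sum_congr rfl this, Finset.sum_boole]
      have hπi : π i = (k : ℝ) - c := by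
        have h2 := Finset.add_sum_erase Finset.univ π (Finset.mem_univ i)
        rw [hsum2, hs] at h2
        linarith
      have hck : (c : ℝ) < k := by linarith
      have : c < k := by exact_mod_cast hck
      have : (c : ℝ) + 1 ≤ k := by exact_mod_cast Nat.succ_le_of_lt this
      linarith
    obtain ⟨j, hjF, hji⟩ := hexj
    have hj := (Finset.mem_filter.mp hjF).2
    have hj0 : 0 < π j := lt_of_le_of_ne (hb j).1 (Ne.symm hj.1)
    have hj1 : π j < 1 := lt_of_le_of_ne (hb j).2 hj.2
    have hij : i ≠ j := hji.symm
    set ε1 := min (1 - π i) (π j) with hε1def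
    set ε2 := min (π i) (1 - π j) with hε2def
    have hε1 : 0 < ε1 := lt_min (by linarith) hj0
    have hε2 : 0 < ε2 := lt_min hi0 (by linarith)
    have hε1a : ε1 ≤ 1 - π i := min_le_left _ _
    have hε1b : ε1 ≤ π j := min_le_right _ _
    have hε2a : ε2 ≤ π i := min_le_left _ _
    have hε2b : ε2 ≤ 1 - π j := min_le_right _ _
    set p1 : Fin m → ℝ := Function.update (Function.update π j (π j - ε1)) i (π i + ε1) with hp1
    set p2 : Fin m → ℝ := Function.update (Function.update π j (π j + ε2)) i (π i - ε2) with hp2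
    have hp1i : p1 i = π i + ε1 := by simp [hp1]
    have hp1j : p1 j = π j - ε1 := by simp [hp1, hij, hji]
    have hp1o : ∀ l, l ≠ i → l ≠ j → p1 l = π l := by
      intro l h1 h2; simp [hp1, h1, h2]
    have hp2i : p2 i = π i - ε2 := by simp [hp2]
    have hp2j : p2 j = π j + ε2 := by simp [hp2, hij, hji]
    have hp2o : ∀ l, l ≠ i → l ≠ j → p2 l = π l := by
      intro l h1 h2; simp [hp2, h1, h2]
    have hb1 : ∀ l, 0 ≤ p1 l ∧ p1 l ≤ 1 := by
      intro l
      by_cases h1 : l = i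
      · subst h1; rw [hp1i]; constructor <;> linarith
      by_cases h2 : l = j
      · subst h2; rw [hp1j]; constructor <;> linarith
      · rw [hp1o l h1 h2]; exact hb l
    have hb2 : ∀ l, 0 ≤ p2 l ∧ p2 l ≤ 1 := by
      intro l
      by_cases h1 : l = i
      · subst h1; rw [hp2i]; constructor <;> linarith
      by_cases h2 : l = j
      · subst h2; rw [hp2j]; constructor <;> linarith
      · rw [hp2o l h1 h2]; exact hb l
    have hs1 : ∑ l : Fin m, p1 l = (k : ℝ) := by
      rw [hp1, sum_two_update π i j hij, hs]; ring
    have hs2 : ∑ l : Fin m, p2 l = (k : ℝ) := by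
      rw [hp2, sum_two_update π i j hij, hs]; ring
    -- fractional-set cardinality bounds
    have hcardF : F.card ≤ n + 1 := hF
    have key : ∀ q : Fin m → ℝ, (∀ l, l ≠ i → l ≠ j → q l = π l) →
        ∀ w, (w = i ∨ w = j) → (q w = 0 ∨ q w = 1) →
        (Finset.univ.filter (fun l : Fin m => q l ≠ 0 ∧ q l ≠ 1)).card ≤ n := by
      intro q hqo w hw hqw
      have hwF : w ∈ F := by rcases hw with h | h <;> (subst h); exacts [hiF, hjF]
      have hsub : (Finset.univ.filter (fun l : Fin m => q l ≠ 0 ∧ q l ≠ 1)) ⊆ F.erase w := by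
        intro l hl
        simp only [Finset.mem_filter, Finset.mem_univ, true_and] at hl
        have hlw : l ≠ w := by
          rintro rfl
          rcases hqw with h | h
          · exact hl.1 h
          · exact hl.2 h
        refine Finset.mem_erase.mpr ⟨hlw, ?_⟩
        by_cases h1 : l = i
        · subst h1; exact hiF
        by_cases h2 : l = j
        · subst h2; exact hjF
        · rw [hqo l h1 h2] at hl
          simp [hFdef, hl.1, hl.2]
      calc (Finset.univ.filter (fun l : Fin m => q l ≠ 0 ∧ q l ≠ 1)).card
          ≤ (F.erase w).card := Finset.card_le_card hsub
        _ = F.card - 1 := Finset.card_erase_of_mem hwF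
        _ ≤ n := by omega
    have hF1 : (Finset.univ.filter (fun l : Fin m => p1 l ≠ 0 ∧ p1 l ≠ 1)).card ≤ n := by
      rcases min_cases (1 - π i) (π j) with ⟨he, _⟩ | ⟨he, _⟩
      · exact key p1 hp1o i (Or.inl rfl) (Or.inr (by rw [hp1i, hε1def, he]; ring))
      · exact key p1 hp1o j (Or.inr rfl) (Or.inl (by rw [hp1j, hε1def, he]; ring))
    have hF2 : (Finset.univ.filter (fun l : Fin m => p2 l ≠ 0 ∧ p2 l ≠ 1)).card ≤ n := by
      rcases min_cases (π i) (1 - π j) with ⟨he, _⟩ | ⟨he, _⟩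
      · exact key p2 hp2o i (Or.inl rfl) (Or.inl (by rw [hp2i, hε2def, he]; ring))
      · exact key p2 hp2o j (Or.inr rfl) (Or.inr (by rw [hp2j, hε2def, he]; ring))
    obtain ⟨P1, hP1n, hP1s, hP1c, hP1m⟩ := ih p1 hb1 hs1 hF1
    obtain ⟨P2, hP2n, hP2s, hP2c, hP2m⟩ := ih p2 hb2 hs2 hF2
    set t : ℝ := ε2 / (ε1 + ε2) with ht
    have hεs : (0:ℝ) < ε1 + ε2 := by linarith
    have ht0 : 0 ≤ t := div_nonneg (le_of_lt hε2) (le_of_lt hεs)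
    have ht1 : t ≤ 1 := by rw [ht, div_le_one hεs]; linarith
    have hts : t * (ε1 + ε2) = ε2 := div_mul_cancel₀ _ (ne_of_gt hεs)
    refine ⟨fun A => t * P1 A + (1 - t) * P2 A, ?_, ?_, ?_, ?_⟩
    · intro A
      exact add_nonneg (mul_nonneg ht0 (hP1n A)) (mul_nonneg (by linarith) (hP2n A))
    · dsimp only
      rw [Finset.sum_add_distrib, ← Finset.mul_sum, ← Finset.mul_sum, hP1s, hP2s]; ring
    · intro A hA
      dsimp only at hA
      by_cases h1 : P1 A = 0
      · have : P2 A ≠ 0 := by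
          intro h2; apply hA; rw [h1, h2]; ring
        exact hP2c A this
      · exact hP1c A h1
    · intro l
      dsimp only
      rw [Finset.sum_add_distrib, ← Finset.mul_sum, ← Finset.mul_sum, hP1m, hP2m]
      by_cases h1 : l = i
      · subst h1; rw [hp1i, hp2i]; linear_combination hts
      by_cases h2 : l = j
      · subst h2; rw [hp1j, hp2j]; linear_combination (-1 : ℝ) * hts
      · rw [hp1o l h1 h2, hp2o l h1 h2]; ring

/-- Feasibility of probabilistic scheduling: a probability distribution on
`k`-element subsets of `Fin m` with prescribed marginals `π_j = P(j ∈ A)`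
exists iff `0 ≤ π_j ≤ 1` for all `j` and `Σ_j π_j = k`. -/
theorem probabilistic_scheduling_feasibility (m k : ℕ) (hk : k ≤ m)
    (π : Fin m → ℝ) :
    (∃ P : Finset (Fin m) → ℝ,
        (∀ A, 0 ≤ P A) ∧
        (∑ A : Finset (Fin m), P A = 1) ∧
        (∀ A, P A ≠ 0 → A.card = k) ∧
        (∀ j : Fin m, ∑ A ∈ Finset.univ.filter (fun A : Finset (Fin m) => j ∈ A), P A = π j))
      ↔ ((∀ j, 0 ≤ π j ∧ π j ≤ 1) ∧ ∑ j : Fin m, π j = (k : ℝ)) := by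
  constructor
  · rintro ⟨P, hP0, hP1, hPc, hPm⟩
    constructor
    · intro j
      constructor
      · rw [← hPm j]
        exact Finset.sum_nonneg (fun A _ => hP0 A)
      · rw [← hPm j, ← hP1]
        exact Finset.sum_le_sum_of_subset_of_nonneg (Finset.filter_subset _ _)
          (fun A _ _ => hP0 A)
    · simp_rw [← hPm, Finset.sum_filter]
      rw [Finset.sum_comm]
      have : ∀ A : Finset (Fin m), (∑ j : Fin m, if j ∈ A then P A else 0) = (k:ℝ) * P A := by
        intro A
        rw [Finset.sum_ite_mem, Finset.univ_inter, Finset.sum_const, nsmul_eq_mul]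
        by_cases h : P A = 0
        · simp [h]
        · rw [hPc A h]
      simp_rw [this, ← Finset.mul_sum, hP1, mul_one]
  · rintro ⟨hb, hs⟩
    exact hypersimplex_aux m k (Finset.univ.filter
      (fun j : Fin m => π j ≠ 0 ∧ π j ≠ 1)).card π hb hs le_rfl
end

section
/- Let α > 0, Λ ≥ 0, β ≥ 0. If there exists t > 0 with t(t − α + Λ) + Λ α (e^{β t} − 1) < 0, then Λ (1/α + β) < 1 (that is, the traffic intensity ρ = Λ/α + Λβ satisfies ρ < 1). -/
/-- Stability claim: if the feasibility constraint
`t(t − α + Λ) + Λα(e^{βt} − 1) < 0` holds for some `t > 0`, then the traffic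
intensity `ρ = Λ(1/α + β)` satisfies `ρ < 1`. -/
theorem feasibility_implies_stability (α Λ β : ℝ)
    (hα : 0 < α) (hΛ : 0 ≤ Λ) (hβ : 0 ≤ β)
    (h : ∃ t : ℝ, 0 < t ∧
      t * (t - α + Λ) + Λ * α * (Real.exp (β * t) - 1) < 0) :
    Λ * (1 / α + β) < 1 := by
  obtain ⟨t, ht, hc⟩ := h
  have hexp : β * t + 1 ≤ Real.exp (β * t) := Real.add_one_le_exp (β * t)
  have key : t * (t - α + Λ) + Λ * α * (β * t) < 0 := by
    have : Λ * α * (β * t) ≤ Λ * α * (Real.exp (β * t) - 1) := by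
      apply mul_le_mul_of_nonneg_left (by linarith) (by positivity)
    linarith
  -- divide by t
  have h2 : t - α + Λ + Λ * α * β < 0 := by
    have := mul_pos ht (show (0:ℝ) < t⁻¹ from inv_pos.mpr ht)
    nlinarith [mul_pos ht ht]
  have h3 : Λ * (1 + α * β) < α := by nlinarith
  rw [div_add' _ _ _ hα.ne', mul_div_assoc', div_lt_one hα]
  nlinarith
end

section
/- Let α > 0, Λ ≥ 0, β ≥ 0, and x ∈ ℝ. Define g(t) = −t² + (α − Λ) t − Λ α (e^{β t} − 1) and let S = {t ∈ ℝ : t > 0 and g(t) > 0}. Then the function F(t) = α t e^{(β − x) t} / g(t) is convex on S. -/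
open Real Set

private lemma hasDerivAt_psi (β t : ℝ) (ht : 0 < t) :
    HasDerivAt (fun t => (Real.exp (β*t) - 1)/t)
      ((β * Real.exp (β*t) * t - (Real.exp (β*t) - 1) * 1) / t^2) t := by
  have h1 : HasDerivAt (fun t : ℝ => Real.exp (β*t) - 1) (β * Real.exp (β*t)) t := by
    have := ((hasDerivAt_id t).const_mul β).exp
    simpa [mul_comm] using this.sub_const 1
  exact h1.div (hasDerivAt_id t) ht.ne'

private lemma hasDerivAt_psi1 (β t : ℝ) (ht : 0 < t) :
    HasDerivAt (fun t => (β * Real.exp (β*t) * t - (Real.exp (β*t) - 1) * 1) / t^2)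
      ((β^2 * Real.exp (β*t) * t * t^2 -
        (β * Real.exp (β*t) * t - (Real.exp (β*t) - 1) * 1) * (2 * t)) / (t^2)^2) t := by
  have hexp : HasDerivAt (fun t : ℝ => Real.exp (β*t)) (β * Real.exp (β*t)) t := by
    have := ((hasDerivAt_id t).const_mul β).exp
    simpa [mul_comm] using this
  have hN : HasDerivAt (fun t : ℝ => β * Real.exp (β*t) * t - (Real.exp (β*t) - 1) * 1)
      (β^2 * Real.exp (β*t) * t) t := by
    have h1 : HasDerivAt (fun t : ℝ => β * Real.exp (β*t) * t)
        ((β * (β * Real.exp (β*t))) * t + (β * Real.exp (β*t)) * 1) t :=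
      (hexp.const_mul β).mul (hasDerivAt_id t)
    have h2 : HasDerivAt (fun t : ℝ => (Real.exp (β*t) - 1) * 1) (β * Real.exp (β*t)) t := by
      simpa using (hexp.sub_const 1)
    refine (h1.sub h2).congr_deriv ?_
    ring
  have hD : HasDerivAt (fun t : ℝ => t^2) (2 * t) t := by
    simpa using hasDerivAt_pow 2 t
  have hne : t^2 ≠ 0 := by positivity
  exact hN.div hD hne

private lemma psi_convexOn (β : ℝ) (hβ : 0 ≤ β) :
    ConvexOn ℝ (Set.Ioi 0) (fun t : ℝ => (Real.exp (β*t) - 1)/t) := by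
  set ψ : ℝ → ℝ := fun t => (Real.exp (β*t) - 1)/t with hψ
  set ψ1 : ℝ → ℝ := fun t => (β * Real.exp (β*t) * t - (Real.exp (β*t) - 1) * 1) / t^2 with hψ1
  have heq : Set.EqOn (deriv ψ) ψ1 (Ioi 0) := fun t ht => (hasDerivAt_psi β t ht).deriv
  apply convexOn_of_deriv2_nonneg (convex_Ioi 0)
  · intro t ht
    exact ((hasDerivAt_psi β t ht).differentiableAt.continuousAt).continuousWithinAt
  · rw [interior_Ioi]
    intro t ht
    exact (hasDerivAt_psi β t ht).differentiableAt.differentiableWithinAt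
  · rw [interior_Ioi]
    refine DifferentiableOn.congr ?_ heq
    intro t ht
    exact (hasDerivAt_psi1 β t ht).differentiableAt.differentiableWithinAt
  · rw [interior_Ioi]
    intro t ht
    have ht' : (0:ℝ) < t := ht
    have hmem : Ioi (0:ℝ) ∈ nhds t := isOpen_Ioi.mem_nhds ht
    have hev : deriv ψ =ᶠ[nhds t] ψ1 := Filter.eventuallyEq_of_mem hmem heq
    have h2 : deriv (deriv ψ) t = deriv ψ1 t := hev.deriv_eq
    have h3 : deriv ψ1 t = (β^2 * Real.exp (β*t) * t * t^2 -
        (β * Real.exp (β*t) * t - (Real.exp (β*t) - 1) * 1) * (2 * t)) / (t^2)^2 :=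
      (hasDerivAt_psi1 β t ht').deriv
    have h4 : deriv^[2] ψ t = deriv (deriv ψ) t := by
      simp [Function.iterate_succ, Function.iterate_zero]
    rw [h4, h2, h3]
    have hquad := Real.quadratic_le_exp_of_nonneg (mul_nonneg hβ ht'.le)
    have hE : (0:ℝ) < Real.exp (β*t) := Real.exp_pos _
    apply div_nonneg _ (by positivity)
    have key : 0 ≤ (Real.exp (β*t) - (1+β*t+(β*t)^2/2)) * ((β*t)^2 - 2*(β*t) + 2) := by
      apply mul_nonneg (by linarith)
      nlinarith [sq_nonneg (β*t - 1)]
    have hh : 0 ≤ β^2 * Real.exp (β*t) * t^2 - 2*(β*t)*Real.exp (β*t) + 2*Real.exp (β*t) - 2 := by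
      nlinarith [key, mul_nonneg (sq_nonneg (β*t)) (sq_nonneg (β*t))]
    nlinarith [mul_nonneg ht'.le hh]

private lemma combo_pos {a b p q : ℝ} (ha : 0 ≤ a) (hb : 0 ≤ b) (hab : a + b = 1)
    (hp : 0 < p) (hq : 0 < q) : 0 < a * p + b * q := by
  have h1 : a * min p q ≤ a * p := mul_le_mul_of_nonneg_left (min_le_left _ _) ha
  have h2 : b * min p q ≤ b * q := mul_le_mul_of_nonneg_left (min_le_right _ _) hb
  have h3 : a * min p q + b * min p q = min p q := by
    rw [← add_mul, hab, one_mul]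
  have := lt_min hp hq
  linarith

/-- Single-node core of Theorem 3: the per-node term
`F(t) = α t e^{(β − x)t} / g(t)` with
`g(t) = −t² + (α − Λ)t − Λα(e^{βt} − 1)` is convex on the feasible region
`S = {t > 0 : g(t) > 0}`. -/
theorem per_node_objective_convex_in_t (α Λ β x : ℝ)
    (hα : 0 < α) (hΛ : 0 ≤ Λ) (hβ : 0 ≤ β) :
    ConvexOn ℝ
      {t : ℝ | 0 < t ∧
        0 < -t ^ 2 + (α - Λ) * t - Λ * α * (Real.exp (β * t) - 1)}
      (fun t : ℝ => α * t * Real.exp ((β - x) * t) /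
        (-t ^ 2 + (α - Λ) * t - Λ * α * (Real.exp (β * t) - 1))) := by
  set φ : ℝ → ℝ := fun t => (α - Λ) - t - Λ*α*((Real.exp (β*t) - 1)/t) with hφdef
  set g : ℝ → ℝ := fun t => -t ^ 2 + (α - Λ) * t - Λ * α * (Real.exp (β * t) - 1) with hgdef
  set S : Set ℝ := {t : ℝ | 0 < t ∧ 0 < g t} with hSdef
  -- φ is concave on (0, ∞)
  have hφconc : ConcaveOn ℝ (Set.Ioi 0) φ := by
    have h1 : ConvexOn ℝ (Set.Ioi 0) (fun t : ℝ => Λ*α*((Real.exp (β*t) - 1)/t)) := by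
      simpa [smul_eq_mul] using (psi_convexOn β hβ).smul (mul_nonneg hΛ hα.le)
    have h2 : ConcaveOn ℝ (Set.Ioi 0) (fun t : ℝ => (α - Λ) - t) := by
      refine ⟨convex_Ioi 0, fun p _ q _ a b ha hb hab => ?_⟩
      simp only [smul_eq_mul]
      have : a * ((α:ℝ) - Λ - p) + b * (α - Λ - q) = α - Λ - (a * p + b * q) := by
        linear_combination (α - Λ) * hab
      linarith
    have h3 := h2.sub h1
    exact h3
  -- g t = t * φ t for t ≠ 0
  have hgφ : ∀ t : ℝ, t ≠ 0 → g t = t * φ t := by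
    intro t ht
    simp only [hgdef, hφdef]
    field_simp
    ring
  have hφpos : ∀ t, t ∈ S → 0 < φ t := by
    intro t ⟨ht0, htg⟩
    have := hgφ t ht0.ne'
    nlinarith
  -- S is convex
  have hS : Convex ℝ S := by
    intro p hp q hq a b ha hb hab
    obtain ⟨hp0, hpg⟩ := hp
    obtain ⟨hq0, hqg⟩ := hq
    have hz0 : 0 < a * p + b * q := combo_pos ha hb hab hp0 hq0
    refine ⟨by simpa [smul_eq_mul] using hz0, ?_⟩
    have h1 := hφconc.2 (Set.mem_Ioi.2 hp0) (Set.mem_Ioi.2 hq0) ha hb hab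
    simp only [smul_eq_mul] at h1 ⊢
    have hcp : 0 < a * φ p + b * φ q :=
      combo_pos ha hb hab (hφpos p ⟨hp0, hpg⟩) (hφpos q ⟨hq0, hqg⟩)
    have hφz : 0 < φ (a * p + b * q) := lt_of_lt_of_le hcp h1
    rw [hgφ _ hz0.ne']
    exact mul_pos hz0 hφz
  -- the function equals exp(log α + (β-x)t − log (φ t)) on S
  have key : ∀ t, t ∈ S → α * t * Real.exp ((β - x) * t) / g t
      = Real.exp (Real.log α + (β - x) * t - Real.log (φ t)) := by
    intro t ht
    obtain ⟨ht0, htg⟩ := ht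
    have hφt := hφpos t ⟨ht0, htg⟩
    rw [Real.exp_sub, Real.exp_add, Real.exp_log hα, Real.exp_log hφt,
      hgφ t ht0.ne']
    field_simp
  refine ⟨hS, ?_⟩
  intro p hp q hq a b ha hb hab
  have hz : a • p + b • q ∈ S := hS hp hq ha hb hab
  simp only [smul_eq_mul] at hz ⊢
  rw [key _ hp, key _ hq, key _ hz]
  set Lp := Real.log α + (β - x) * p - Real.log (φ p) with hLp
  set Lq := Real.log α + (β - x) * q - Real.log (φ q) with hLq
  -- concavity of log ∘ φ on S
  have hφp := hφpos p hp
  have hφq := hφpos q hq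
  have hcomb : 0 < a * φ p + b * φ q := combo_pos ha hb hab hφp hφq
  have h1 := hφconc.2 (Set.mem_Ioi.2 hp.1) (Set.mem_Ioi.2 hq.1) ha hb hab
  simp only [smul_eq_mul] at h1
  have h2 : a * Real.log (φ p) + b * Real.log (φ q) ≤ Real.log (a * φ p + b * φ q) := by
    have := strictConcaveOn_log_Ioi.concaveOn.2 (Set.mem_Ioi.2 hφp) (Set.mem_Ioi.2 hφq) ha hb hab
    simpa [smul_eq_mul] using this
  have h3 : Real.log (a * φ p + b * φ q) ≤ Real.log (φ (a * p + b * q)) :=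
    Real.log_le_log hcomb h1
  have hL : Real.log α + (β - x) * (a * p + b * q) - Real.log (φ (a * p + b * q))
      ≤ a * Lp + b * Lq := by
    simp only [hLp, hLq]
    have hl : a * Real.log α + b * Real.log α = Real.log α := by
      rw [← add_mul, hab, one_mul]
    have hlin : a * ((β - x) * p) + b * ((β - x) * q) = (β - x) * (a * p + b * q) := by ring
    linarith [h2, h3]
  calc Real.exp (Real.log α + (β - x) * (a * p + b * q) - Real.log (φ (a * p + b * q)))
      ≤ Real.exp (a * Lp + b * Lq) := Real.exp_le_exp.2 hL
    _ ≤ a * Real.exp Lp + b * Real.exp Lq := by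
        have := convexOn_exp.2 (Set.mem_univ Lp) (Set.mem_univ Lq) ha hb hab
        simpa [smul_eq_mul] using this
end

section
/- Let m be a natural number and for each j ∈ Fin m let α_j > 0, Λ_j ≥ 0, β_j ≥ 0, c_j ≥ 0, and fix x ∈ ℝ. Define g_j(t) = −t² + (α_j − Λ_j) t − Λ_j α_j (e^{β_j t} − 1), and let S = {t ∈ ℝ^m : for all j, t_j > 0 and g_j(t_j) > 0}. Then the function F(t) = Σ_{j=1}^m c_j · α_j t_j e^{(β_j − x) t_j} / g_j(t_j) is convex on S (in particular S is a convex subset of ℝ^m). -/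
open Real Set


private lemma rconv (β : ℝ) (hβ : 0 ≤ β) :
    ConvexOn ℝ (Ioi (0:ℝ)) (fun t => (Real.exp (β*t) - 1) * t⁻¹) := by
  set r1 : ℝ → ℝ := fun t => β * Real.exp (β*t) * t⁻¹ - (Real.exp (β*t) - 1) * (t^2)⁻¹ with hr1
  set r2 : ℝ → ℝ := fun t => β^2 * Real.exp (β*t) * t⁻¹ - 2*β*Real.exp (β*t) * (t^2)⁻¹
      + 2*(Real.exp (β*t) - 1) * (t^3)⁻¹ with hr2
  have hde : ∀ t : ℝ, t ≠ 0 → HasDerivAt (fun s => Real.exp (β*s)) (β * Real.exp (β*t)) t := by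
    intro t ht
    have := ((hasDerivAt_id t).const_mul β).exp
    simpa [mul_comm] using this
  have hD1 : ∀ t : ℝ, t ≠ 0 → HasDerivAt (fun s => (Real.exp (β*s) - 1) * s⁻¹) (r1 t) t := by
    intro t ht
    have h1 : HasDerivAt (fun s => Real.exp (β*s) - 1) (β * Real.exp (β*t)) t :=
      (hde t ht).sub_const 1
    have h2 : HasDerivAt (fun s : ℝ => s⁻¹) (-(t^2)⁻¹) t := hasDerivAt_inv ht
    have := h1.mul h2
    refine this.congr_deriv ?_
    simp [hr1]; ring
  have hD2 : ∀ t : ℝ, t ≠ 0 → HasDerivAt r1 (r2 t) t := by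
    intro t ht
    have h1 : HasDerivAt (fun s => β * Real.exp (β*s)) (β * (β * Real.exp (β*t))) t :=
      (hde t ht).const_mul β
    have h2 : HasDerivAt (fun s : ℝ => s⁻¹) (-(t^2)⁻¹) t := hasDerivAt_inv ht
    have hsq : HasDerivAt (fun s : ℝ => (s^2)⁻¹) (-(2*t) / (t^2)^2) t := by
      have := (hasDerivAt_pow 2 t).inv (pow_ne_zero 2 ht)
      exact this.congr_deriv (by norm_num)
    have h3 : HasDerivAt (fun s => Real.exp (β*s) - 1) (β * Real.exp (β*t)) t :=
      (hde t ht).sub_const 1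
    have := (h1.mul h2).sub (h3.mul hsq)
    refine this.congr_deriv ?_
    have h4 : (t^2)^2 = t^4 := by ring
    rw [hr2]; field_simp
    ring
  apply convexOn_of_hasDerivWithinAt2_nonneg (f' := r1) (f'' := r2) (convex_Ioi 0)
  · -- continuity
    intro t ht
    exact ((Real.continuous_exp.comp (continuous_const.mul continuous_id)).sub
      continuous_const).continuousWithinAt.mul
      (continuousAt_inv₀ (ne_of_gt ht)).continuousWithinAt
  · intro t ht
    rw [interior_Ioi] at ht
    exact (hD1 t (ne_of_gt ht)).hasDerivWithinAt
  · intro t ht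
    rw [interior_Ioi] at ht
    exact (hD2 t (ne_of_gt ht)).hasDerivWithinAt
  · intro t ht
    rw [interior_Ioi] at ht
    have ht0 : (0:ℝ) < t := ht
    have hs : 0 ≤ β * t := mul_nonneg hβ ht0.le
    have hexp := Real.sum_le_exp_of_nonneg hs 4
    have hexp' : 1 + β*t + (β*t)^2/2 + (β*t)^3/6 ≤ Real.exp (β*t) := by
      have : ∑ i ∈ Finset.range 4, (β*t)^i / (Nat.factorial i) =
          1 + β*t + (β*t)^2/2 + (β*t)^3/6 := by
        simp [Finset.sum_range_succ, Nat.factorial]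
      linarith [this ▸ hexp]
    -- key : 0 ≤ s^2 e^s - 2 s e^s + 2 e^s - 2 with s = β t
    have key : 0 ≤ (β*t)^2 * Real.exp (β*t) - 2*(β*t)*Real.exp (β*t) + 2*Real.exp (β*t) - 2 := by
      nlinarith [sq_nonneg (β*t - 1), mul_nonneg (sub_nonneg.2 hexp') (sq_nonneg (β*t-1)),
        pow_nonneg hs 3, pow_nonneg hs 4, pow_nonneg hs 5]
    -- r2 t = (that) / t^3
    have ht3 : (0:ℝ) < t^3 := by positivity
    show 0 ≤ r2 t
    have heq : r2 t
        = ((β*t)^2 * Real.exp (β*t) - 2*(β*t)*Real.exp (β*t) + 2*Real.exp (β*t) - 2) / t^3 := by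
      rw [hr2]
      field_simp
      ring
    rw [heq]
    positivity

private lemma oneD (α Λ β c x : ℝ) (hα : 0 < α) (hΛ : 0 ≤ Λ) (hβ : 0 ≤ β) (hc : 0 ≤ c) :
    ConvexOn ℝ {t : ℝ | 0 < t ∧ 0 < -t^2 + (α - Λ)*t - Λ*α*(Real.exp (β*t) - 1)}
      (fun t => c * (α * t * Real.exp ((β - x)*t) /
        (-t^2 + (α - Λ)*t - Λ*α*(Real.exp (β*t) - 1)))) := by
  set G : ℝ → ℝ := fun t => -t^2 + (α - Λ)*t - Λ*α*(Real.exp (β*t) - 1) with hG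
  set q : ℝ → ℝ := fun t => (α - Λ) - t - (Λ*α) * ((Real.exp (β*t) - 1) * t⁻¹) with hq
  have hGq : ∀ t : ℝ, t ≠ 0 → G t = t * q t := by
    intro t ht
    rw [hG, hq]
    field_simp
    ring
  have hK : 0 ≤ Λ*α := mul_nonneg hΛ hα.le
  have hr := rconv β hβ
  -- q is concave on Ioi 0
  have hqconc : ConcaveOn ℝ (Ioi (0:ℝ)) q := by
    constructor
    · exact convex_Ioi 0
    · intro u hu v hv a b ha hb hab
      have h1 := hr.2 hu hv ha hb hab
      simp only [smul_eq_mul, hq] at h1 ⊢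
      nlinarith [mul_le_mul_of_nonneg_left h1 hK]
  set D : Set ℝ := {t : ℝ | 0 < t ∧ 0 < G t} with hD
  have hDq : ∀ t ∈ D, 0 < q t := by
    rintro t ⟨ht, hGt⟩
    have := hGq t (ne_of_gt ht)
    nlinarith
  have hDconv : Convex ℝ D := by
    intro u hu v hv a b ha hb hab
    have hz : 0 < a*u + b*v := by
      have := (convex_Ioi (0:ℝ)) (mem_Ioi.2 hu.1) (mem_Ioi.2 hv.1) ha hb hab
      simpa using this
    refine ⟨by simpa using hz, ?_⟩
    have hquv := hqconc.2 hu.1 hv.1 ha hb hab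
    simp only [smul_eq_mul] at hquv hz ⊢
    have hq1 := hDq u hu
    have hq2 := hDq v hv
    have hqz : 0 < q (a*u + b*v) := by
      have := (convex_Ioi (0:ℝ)) (mem_Ioi.2 hq1) (mem_Ioi.2 hq2) ha hb hab
      simp only [smul_eq_mul, mem_Ioi] at this
      linarith
    have := hGq (a*u+b*v) (ne_of_gt hz)
    have : 0 < G (a*u+b*v) := by rw [hGq _ (ne_of_gt hz)]; exact mul_pos hz hqz
    simpa using this
  -- rewrite f on D
  have hfeq : ∀ t ∈ D, c * (α * t * Real.exp ((β - x)*t) / G t)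
      = (c*α) * Real.exp ((β - x)*t - Real.log (q t)) := by
    rintro t ⟨ht, hGt⟩
    have hqt := hDq t ⟨ht, hGt⟩
    rw [Real.exp_sub, Real.exp_log hqt, hGq t (ne_of_gt ht)]
    field_simp
  constructor
  · exact hDconv
  · intro u hu v hv a b ha hb hab
    have hz : a • u + b • v ∈ D := hDconv hu hv ha hb hab
    simp only [smul_eq_mul] at hz ⊢
    rw [hfeq _ hu, hfeq _ hv, hfeq _ hz]
    -- ψ is convex
    have hqu := hDq u hu
    have hqv := hDq v hv
    have hquv := hqconc.2 hu.1 hv.1 ha hb hab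
    simp only [smul_eq_mul] at hquv
    have hlog1 : a * Real.log (q u) + b * Real.log (q v)
        ≤ Real.log (q (a*u + b*v)) := by
      have hcc := (strictConcaveOn_log_Ioi.concaveOn).2 (mem_Ioi.2 hqu) (mem_Ioi.2 hqv) ha hb hab
      simp only [smul_eq_mul] at hcc
      calc a * Real.log (q u) + b * Real.log (q v) ≤ Real.log (a * q u + b * q v) := hcc
        _ ≤ Real.log (q (a*u + b*v)) := by
            apply Real.log_le_log _ hquv
            have := (convex_Ioi (0:ℝ)) (mem_Ioi.2 hqu) (mem_Ioi.2 hqv) ha hb hab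
            simpa using this
    have hψ : (β - x)*(a*u + b*v) - Real.log (q (a*u + b*v))
        ≤ a * ((β - x)*u - Real.log (q u)) + b * ((β - x)*v - Real.log (q v)) := by
      nlinarith
    have hexp1 : Real.exp ((β - x)*(a*u + b*v) - Real.log (q (a*u + b*v)))
        ≤ Real.exp (a * ((β - x)*u - Real.log (q u)) + b * ((β - x)*v - Real.log (q v))) :=
      Real.exp_le_exp.2 hψ
    have hexp2 := convexOn_exp.2 (mem_univ ((β - x)*u - Real.log (q u)))
      (mem_univ ((β - x)*v - Real.log (q v))) ha hb hab
    simp only [smul_eq_mul] at hexp2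
    have hca : 0 ≤ c*α := mul_nonneg hc hα.le
    calc (c*α) * Real.exp ((β - x)*(a*u + b*v) - Real.log (q (a*u + b*v)))
        ≤ (c*α) * (a * Real.exp ((β - x)*u - Real.log (q u))
            + b * Real.exp ((β - x)*v - Real.log (q v))) := by
          apply mul_le_mul_of_nonneg_left _ hca
          exact hexp1.trans hexp2
      _ = a * ((c*α) * Real.exp ((β - x)*u - Real.log (q u)))
            + b * ((c*α) * Real.exp ((β - x)*v - Real.log (q v))) := by ring

open Finset in
/-- Theorem 3: the WLTP objective
`F(t) = Σ_j c_j · α_j t_j e^{(β_j − x)t_j} / g_j(t_j)`, with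
`g_j(t) = −t² + (α_j − Λ_j)t − Λ_jα_j(e^{β_j t} − 1)`, is convex in the vector
`t = (t_1, …, t_m)` on the feasible region
`S = {t : ∀ j, t_j > 0 and g_j(t_j) > 0}`. -/
theorem objective_convex_in_t (m : ℕ) (α Λ β c : Fin m → ℝ) (x : ℝ)
    (hα : ∀ j, 0 < α j) (hΛ : ∀ j, 0 ≤ Λ j) (hβ : ∀ j, 0 ≤ β j)
    (hc : ∀ j, 0 ≤ c j) :
    ConvexOn ℝ
      {t : Fin m → ℝ | ∀ j, 0 < t j ∧
        0 < -(t j) ^ 2 + (α j - Λ j) * t j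
              - Λ j * α j * (Real.exp (β j * t j) - 1)}
      (fun t : Fin m → ℝ => ∑ j : Fin m,
        c j * (α j * t j * Real.exp ((β j - x) * t j) /
          (-(t j) ^ 2 + (α j - Λ j) * t j
            - Λ j * α j * (Real.exp (β j * t j) - 1)))) := by
  have h : ∀ j : Fin m, ConvexOn ℝ
      {t : ℝ | 0 < t ∧ 0 < -t^2 + (α j - Λ j)*t - Λ j*α j*(Real.exp (β j*t) - 1)}
      (fun t => c j * (α j * t * Real.exp ((β j - x)*t) /
        (-t^2 + (α j - Λ j)*t - Λ j*α j*(Real.exp (β j*t) - 1)))) :=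
    fun j => oneD (α j) (Λ j) (β j) (c j) x (hα j) (hΛ j) (hβ j) (hc j)
  constructor
  · intro t ht u hu a b ha hb hab j
    have hj := (h j).1 (ht j) (hu j) ha hb hab
    simpa [smul_eq_mul] using hj
  · intro t ht u hu a b ha hb hab
    simp only [Pi.add_apply, Pi.smul_apply, smul_eq_mul]
    calc (∑ j : Fin m, c j * (α j * (a * t j + b * u j) *
            Real.exp ((β j - x) * (a * t j + b * u j)) /
          (-(a * t j + b * u j) ^ 2 + (α j - Λ j) * (a * t j + b * u j)
            - Λ j * α j * (Real.exp (β j * (a * t j + b * u j)) - 1))))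
        ≤ ∑ j : Fin m, (a * (c j * (α j * t j * Real.exp ((β j - x) * t j) /
              (-(t j) ^ 2 + (α j - Λ j) * t j - Λ j * α j * (Real.exp (β j * t j) - 1))))
            + b * (c j * (α j * u j * Real.exp ((β j - x) * u j) /
              (-(u j) ^ 2 + (α j - Λ j) * u j - Λ j * α j * (Real.exp (β j * u j) - 1))))) := by
          apply Finset.sum_le_sum
          intro j _
          have hj := (h j).2 (ht j) (hu j) ha hb hab
          simpa [smul_eq_mul] using hj
      _ = _ := by
          rw [Finset.sum_add_distrib, Finset.mul_sum, Finset.mul_sum]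
end

section
/- Let 0 ≤ C₁ ≤ C₂ with C₂ > 0. Then the function G(Λ) = Λ (1 − C₁ Λ)/(1 − C₂ Λ) is convex on the interval [0, 1/C₂). -/
/-- Single-node core of Theorem 4: for `0 ≤ C₁ ≤ C₂` with `C₂ > 0`, the
function `G(Λ) = Λ(1 − C₁Λ)/(1 − C₂Λ)` is convex on `[0, 1/C₂)`. -/
theorem G_convex (C₁ C₂ : ℝ) (hC₁ : 0 ≤ C₁) (hC₁₂ : C₁ ≤ C₂) (hC₂ : 0 < C₂) :
    ConvexOn ℝ (Set.Ico (0 : ℝ) (1 / C₂))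
      (fun Λ : ℝ => Λ * (1 - C₁ * Λ) / (1 - C₂ * Λ)) := by
  have hC₂' : C₂ ≠ 0 := ne_of_gt hC₂
  set A : ℝ := (C₂ - C₁) / C₂ ^ 2 with hA
  have hA0 : 0 ≤ A := div_nonneg (by linarith) (by positivity)
  have hupos : ∀ x ∈ Set.Ico (0 : ℝ) (1 / C₂), 0 < 1 - C₂ * x := by
    intro x hx
    have hx2 : x < 1 / C₂ := hx.2
    have : C₂ * x < 1 := by
      have := (lt_div_iff₀ hC₂).mp hx2
      linarith [mul_comm x C₂]
    linarith
  -- convexity of Λ ↦ (1 - C₂Λ)⁻¹ on the set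
  have hinv : ConvexOn ℝ (Set.Ico (0 : ℝ) (1 / C₂)) (fun Λ : ℝ => (1 - C₂ * Λ)⁻¹) := by
    have h1 : ConvexOn ℝ (Set.Ioi (0 : ℝ)) (fun x : ℝ => x⁻¹) := by
      have := convexOn_zpow (𝕜 := ℝ) (-1)
      simpa [zpow_neg_one] using this
    have h2 := h1.comp_affineMap (AffineMap.lineMap (1 : ℝ) (1 - C₂) : ℝ →ᵃ[ℝ] ℝ)
    have hmap : ∀ t : ℝ,
        (AffineMap.lineMap (1 : ℝ) (1 - C₂) : ℝ →ᵃ[ℝ] ℝ) t = 1 - C₂ * t := by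
      intro t
      simp [AffineMap.lineMap_apply, smul_eq_mul]
      ring
    have hpre : Set.Ico (0 : ℝ) (1 / C₂) ⊆
        (AffineMap.lineMap (1 : ℝ) (1 - C₂) : ℝ →ᵃ[ℝ] ℝ) ⁻¹' Set.Ioi 0 := by
      intro x hx
      simp only [Set.mem_preimage, Set.mem_Ioi, hmap]
      exact hupos x hx
    have h3 := h2.subset hpre (convex_Ico _ _)
    refine h3.congr ?_
    intro x _
    simp [Function.comp, hmap]
  -- the decomposed function
  have hg : ConvexOn ℝ (Set.Ico (0 : ℝ) (1 / C₂))
      (fun Λ : ℝ => A * (1 - C₂ * Λ)⁻¹ + ((C₁ - C₂) / C₂ ^ 2 + (C₁ / C₂) * Λ)) := by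
    have hlin : ConvexOn ℝ (Set.Ico (0 : ℝ) (1 / C₂))
        (fun Λ : ℝ => (C₁ - C₂) / C₂ ^ 2 + (C₁ / C₂) * Λ) := by
      have h := ((convexOn_id (convex_Ico (0:ℝ) (1 / C₂))).smul
        (div_nonneg hC₁ hC₂.le)).add_const ((C₁ - C₂) / C₂ ^ 2)
      convert h using 2 with x
      case e'_12 => simp [smul_eq_mul]; ring
      all_goals rfl
    exact (hinv.smul hA0).add hlin
  refine hg.congr ?_
  intro x hx
  have hu : 1 - C₂ * x ≠ 0 := ne_of_gt (hupos x hx)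
  rw [hA, eq_comm, div_eq_iff hu]
  beta_reduce
  simp only [add_mul, mul_assoc, inv_mul_cancel₀ hu]
  field_simp
  ring
end

section
/- Let r, m be natural numbers, let λ_i ≥ 0 for i ∈ Fin r, and for each j ∈ Fin m let K_j ≥ 0 and 0 ≤ C₁_j ≤ C₂_j with C₂_j > 0. For a matrix π ∈ ℝ^{r×m} write Λ_j(π) = Σ_{i=1}^r λ_i π_{i j}, and define D = {π ∈ ℝ^{r×m} : π_{i j} ≥ 0 for all i, j, and C₂_j · Λ_j(π) < 1 for all j}. Then the function F(π) = Σ_{j=1}^m K_j · Λ_j(π) (1 − C₁_j Λ_j(π)) / (1 − C₂_j Λ_j(π)) is convex on D (in particular D is a convex subset of ℝ^{r×m}). -/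
open Finset

lemma pos_combo {u v a b : ℝ} (hu : 0 < u) (hv : 0 < v) (ha : 0 ≤ a) (hb : 0 ≤ b)
    (hab : a + b = 1) : 0 < a*u + b*v := by
  rcases eq_or_lt_of_le ha with h | h
  · have hb1 : b = 1 := by linarith
    rw [← h, hb1]; simpa using hv
  · nlinarith [mul_pos h hu, mul_nonneg hb hv.le]

lemma combo_lt_one {p q a b : ℝ} (hp : p < 1) (hq : q < 1) (ha : 0 ≤ a) (hb : 0 ≤ b)
    (hab : a + b = 1) : a*p + b*q < 1 := by
  rcases eq_or_lt_of_le ha with h | h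
  · have hb1 : b = 1 := by linarith
    rw [← h, hb1]; simpa using hq
  · nlinarith [mul_lt_mul_of_pos_left hp h, mul_le_mul_of_nonneg_left hq.le hb]

lemma inv_combo {u v a b : ℝ} (hu : 0 < u) (hv : 0 < v) (ha : 0 ≤ a) (hb : 0 ≤ b)
    (hab : a + b = 1) : (a*u + b*v)⁻¹ ≤ a * u⁻¹ + b * v⁻¹ := by
  have hw : 0 < a*u + b*v := pos_combo hu hv ha hb hab
  have hb' : b = 1 - a := by linarith
  subst hb'
  have h1 : a * u⁻¹ + (1-a) * v⁻¹ = (a*v + (1-a)*u) / (u*v) := by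
    field_simp
  rw [h1, inv_eq_one_div, div_le_div_iff₀ hw (mul_pos hu hv)]
  nlinarith [mul_nonneg (mul_nonneg ha hb) (sq_nonneg (u - v))]

lemma g_decomp (C₁ C₂ t : ℝ) (hC₂ : 0 < C₂) (ht : C₂ * t < 1) :
    t * (1 - C₁*t) / (1 - C₂*t)
      = ((C₂ - C₁)/C₂^2) * (1 - C₂*t)⁻¹ + (C₁/C₂)*t - (C₂ - C₁)/C₂^2 := by
  have h : 1 - C₂*t ≠ 0 := by linarith
  have h' : 1 - t*C₂ ≠ 0 := by linarith
  field_simp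
  ring

lemma scalar_key (K C₁ C₂ : ℝ) (hK : 0 ≤ K) (hC₁ : 0 ≤ C₁) (h12 : C₁ ≤ C₂)
    (hC₂ : 0 < C₂) {x y a b : ℝ} (hx : C₂*x < 1) (hy : C₂*y < 1)
    (ha : 0 ≤ a) (hb : 0 ≤ b) (hab : a + b = 1) :
    K * ((a*x + b*y) * (1 - C₁*(a*x + b*y)) / (1 - C₂*(a*x + b*y)))
      ≤ a * (K * (x*(1 - C₁*x)/(1 - C₂*x))) + b * (K * (y*(1 - C₁*y)/(1 - C₂*y))) := by
  have hu : 0 < 1 - C₂*x := by linarith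
  have hv : 0 < 1 - C₂*y := by linarith
  have hw : 1 - C₂*(a*x + b*y) = a*(1 - C₂*x) + b*(1 - C₂*y) := by
    linear_combination -hab
  have hwlt : C₂*(a*x + b*y) < 1 := by
    have := pos_combo hu hv ha hb hab
    linarith [hw ▸ this]
  have hinv := inv_combo hu hv ha hb hab
  have hA : 0 ≤ K * ((C₂ - C₁)/C₂^2) :=
    mul_nonneg hK (div_nonneg (by linarith) (by positivity))
  rw [g_decomp C₁ C₂ x hC₂ hx, g_decomp C₁ C₂ y hC₂ hy,
    g_decomp C₁ C₂ (a*x + b*y) hC₂ hwlt, hw]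
  nlinarith [mul_le_mul_of_nonneg_left hinv hA]

/-- Theorem 4: with `Λ_j(π) = Σ_i λ_i π_{ij}`, the WLTP objective
`F(π) = Σ_j K_j Λ_j(π)(1 − C₁_j Λ_j(π))/(1 − C₂_j Λ_j(π))` is convex in the
scheduling probabilities `π` on the region
`D = {π : π_{ij} ≥ 0, C₂_j Λ_j(π) < 1}`. -/
theorem objective_convex_in_pi (r m : ℕ) (lam : Fin r → ℝ)
    (hlam : ∀ i, 0 ≤ lam i) (K C₁ C₂ : Fin m → ℝ)
    (hK : ∀ j, 0 ≤ K j) (hC₁ : ∀ j, 0 ≤ C₁ j) (hC₁₂ : ∀ j, C₁ j ≤ C₂ j)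
    (hC₂ : ∀ j, 0 < C₂ j) :
    ConvexOn ℝ
      {π : Fin r → Fin m → ℝ | (∀ i j, 0 ≤ π i j) ∧
        ∀ j, C₂ j * (∑ i : Fin r, lam i * π i j) < 1}
      (fun π : Fin r → Fin m → ℝ => ∑ j : Fin m,
        K j * ((∑ i : Fin r, lam i * π i j) *
          (1 - C₁ j * (∑ i : Fin r, lam i * π i j)) /
          (1 - C₂ j * (∑ i : Fin r, lam i * π i j)))) := by
  have key : ∀ (π σ : Fin r → Fin m → ℝ) (a b : ℝ),
      ∀ j, ∑ i : Fin r, lam i * (a • π + b • σ) i j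
        = a * (∑ i : Fin r, lam i * π i j) + b * (∑ i : Fin r, lam i * σ i j) := by
    intro π σ a b j
    simp only [Pi.add_apply, Pi.smul_apply, smul_eq_mul, Finset.mul_sum]
    rw [← Finset.sum_add_distrib]
    exact Finset.sum_congr rfl fun i _ => by ring
  constructor
  · intro π hπ σ hσ a b ha hb hab
    constructor
    · intro i j
      have h1 := hπ.1 i j
      have h2 := hσ.1 i j
      simp only [Pi.add_apply, Pi.smul_apply, smul_eq_mul]
      nlinarith
    · intro j
      rw [key π σ a b j]
      have h1 : C₂ j * (a * (∑ i : Fin r, lam i * π i j) + b * (∑ i : Fin r, lam i * σ i j))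
          = a * (C₂ j * ∑ i : Fin r, lam i * π i j) + b * (C₂ j * ∑ i : Fin r, lam i * σ i j) := by
        ring
      rw [h1]
      exact combo_lt_one (hπ.2 j) (hσ.2 j) ha hb hab
  · intro π hπ σ hσ a b ha hb hab
    simp only
    rw [Finset.smul_sum, Finset.smul_sum, ← Finset.sum_add_distrib]
    refine Finset.sum_le_sum fun j _ => ?_
    rw [key π σ a b j]
    simpa [smul_eq_mul] using scalar_key (K j) (C₁ j) (C₂ j) (hK j) (hC₁ j) (hC₁₂ j)
      (hC₂ j) (hπ.2 j) (hσ.2 j) ha hb hab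
end
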